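/- (Tail bound converting moments to (ε, δ)-differential privacy.) Let μ and ν be probability measures on a measurable space with μ absolutely continuous with respect to ν, and let dμ/dν denote the Radon–Nikodym derivative. Then for every real λ > 0, every real ε > 0, and every measurable set S, μ(S) ≤ e^ε·ν(S) + e^{−λε}·∫ (dμ/dν)^λ dμ (the integral taken in [0,∞]). In particular, if the λ-th moment α(λ) = log ∫ (dμ/dν)^λ dμ is finite, then μ and ν are (ε, δ)-indistinguishable with δ = exp(α(λ) − λε), and hence with δ = inf_{λ>0} exp(α(λ) − λε). -/

import Mathlib

open MeasureTheory ProbabilityTheory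

/-- Tail bound converting moments to (ε,δ)-differential privacy: for `μ ≪ ν`,
`μ S ≤ e^ε ν S + e^{-λε} ∫ (dμ/dν)^λ dμ` for all measurable `S`; in particular if the
λ-th moment `α(λ) = log ∫ (dμ/dν)^λ dμ` is finite, `μ` and `ν` are
`(ε, exp(α(λ) - λε))`-indistinguishable. -/
theorem moments_tail_bound
    {Ω : Type*} [MeasurableSpace Ω]
    (μ ν : Measure Ω) [IsProbabilityMeasure μ] [IsProbabilityMeasure ν]
    (hac : μ ≪ ν) :
    (∀ lam ε : ℝ, 0 < lam → 0 < ε → ∀ S : Set Ω, MeasurableSet S →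
      μ S ≤ ENNReal.ofReal (Real.exp ε) * ν S
        + ENNReal.ofReal (Real.exp (-(lam * ε))) * ∫⁻ x, (μ.rnDeriv ν x) ^ lam ∂μ) ∧
    (∀ lam ε : ℝ, 0 < lam → 0 < ε →
      (∫⁻ x, (μ.rnDeriv ν x) ^ lam ∂μ) ≠ ⊤ →
      ∀ S : Set Ω, MeasurableSet S →
        μ S ≤ ENNReal.ofReal (Real.exp ε) * ν S
          + ENNReal.ofReal
              (Real.exp (Real.log ((∫⁻ x, (μ.rnDeriv ν x) ^ lam ∂μ).toReal) - lam * ε))) := by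
  have hf : Measurable (μ.rnDeriv ν) := Measure.measurable_rnDeriv μ ν
  have main : ∀ lam ε : ℝ, 0 < lam → 0 < ε → ∀ S : Set Ω, MeasurableSet S →
      μ S ≤ ENNReal.ofReal (Real.exp ε) * ν S
        + ENNReal.ofReal (Real.exp (-(lam * ε))) * ∫⁻ x, (μ.rnDeriv ν x) ^ lam ∂μ := by
    intro lam ε hlam hε S hS
    set f := μ.rnDeriv ν with hfdef
    set c : ENNReal := ENNReal.ofReal (Real.exp ε) with hc
    set A : Set Ω := {x | c < f x} with hA
    have hAm : MeasurableSet A := measurableSet_lt measurable_const hf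
    have hsplit : μ S ≤ μ (S ∩ A) + μ (S \ A) := measure_le_inter_add_diff μ S A
    -- bound μ (S \ A)
    have h1 : μ (S \ A) ≤ c * ν S := by
      rw [← Measure.setLIntegral_rnDeriv hac (S \ A)]
      calc ∫⁻ x in S \ A, f x ∂ν ≤ ∫⁻ _ in S \ A, c ∂ν := by
            refine setLIntegral_mono measurable_const fun x hx => ?_
            exact not_lt.mp hx.2
        _ = c * ν (S \ A) := by rw [setLIntegral_const]
        _ ≤ c * ν S := by
            gcongr
            exact Set.diff_subset
    -- Markov bound on μ A
    have hexp : c ^ lam = ENNReal.ofReal (Real.exp (lam * ε)) := by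
      rw [hc, ENNReal.ofReal_rpow_of_pos (Real.exp_pos ε), ← Real.exp_mul, mul_comm]
    have hmarkov : c ^ lam * μ {x | c ^ lam ≤ f x ^ lam} ≤ ∫⁻ x, f x ^ lam ∂μ :=
      mul_meas_ge_le_lintegral₀ (hf.pow_const lam).aemeasurable _
    have hsub : A ⊆ {x | c ^ lam ≤ f x ^ lam} := fun x hx =>
      ENNReal.rpow_le_rpow (le_of_lt hx) hlam.le
    have h2 : μ (S ∩ A) ≤ ENNReal.ofReal (Real.exp (-(lam * ε))) * ∫⁻ x, f x ^ lam ∂μ := by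
      have hμA : μ (S ∩ A) ≤ μ {x | c ^ lam ≤ f x ^ lam} :=
        measure_mono fun x hx => hsub hx.2
      have key : ENNReal.ofReal (Real.exp (-(lam * ε))) * (c ^ lam * μ {x | c ^ lam ≤ f x ^ lam})
          = μ {x | c ^ lam ≤ f x ^ lam} := by
        rw [← mul_assoc, hexp, ← ENNReal.ofReal_mul (Real.exp_nonneg _), ← Real.exp_add]
        simp
      calc μ (S ∩ A) ≤ μ {x | c ^ lam ≤ f x ^ lam} := hμA
        _ = ENNReal.ofReal (Real.exp (-(lam * ε))) * (c ^ lam * μ {x | c ^ lam ≤ f x ^ lam}) :=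
            key.symm
        _ ≤ ENNReal.ofReal (Real.exp (-(lam * ε))) * ∫⁻ x, f x ^ lam ∂μ := by gcongr
    calc μ S ≤ μ (S ∩ A) + μ (S \ A) := hsplit
      _ ≤ (ENNReal.ofReal (Real.exp (-(lam * ε))) * ∫⁻ x, f x ^ lam ∂μ) + c * ν S :=
          add_le_add h2 h1
      _ = c * ν S + ENNReal.ofReal (Real.exp (-(lam * ε))) * ∫⁻ x, f x ^ lam ∂μ := add_comm _ _
  refine ⟨main, fun lam ε hlam hε hfin S hS => ?_⟩
  refine (main lam ε hlam hε S hS).trans (add_le_add_right ?_ _)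
  set E := ∫⁻ x, (μ.rnDeriv ν x) ^ lam ∂μ with hE
  rcases eq_or_ne E 0 with h0 | h0
  · simp [h0]
  · have hpos : 0 < E.toReal := ENNReal.toReal_pos h0 hfin
    have : Real.exp (Real.log E.toReal - lam * ε) = Real.exp (-(lam * ε)) * E.toReal := by
      rw [Real.exp_sub, Real.exp_log hpos, Real.exp_neg]
      ring
    rw [this, ENNReal.ofReal_mul (Real.exp_nonneg _), ENNReal.ofReal_toReal hfin]
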